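/- Let l ≥ 5 be an integer. An element Σ c_{u,v}·XY(u,v) of the free ℂ-vector space with basis symbols XY(u,v), one for each (u,v) ∈ (ℤ/lℤ)² with gcd(u,v,l) = 1, maps to 0 under the linear map sending XY(u,v) to the class of xy(u,v) in M₄(l) if and only if it lies in the span of the elements XY(u,v) − XY(v,−u) and Σ_{k=0}^{l−1} ( XY(v+ku, −(k+1)u−v) − XY(−(k+1)u−v, u) − XY(u, v+ku) ), taken over all (u,v) with gcd(u,v,l) = 1. -/

import Mathlib

open scoped BigOperators

namespace MW

variable (l : ℕ)

/-- Index type for the basis symbols: `0 ↦ x²`, `1 ↦ xy`, `2 ↦ y²`. -/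
abbrev Sym := Fin 3 × ZMod l × ZMod l

/-- The free ℂ-vector space on the symbols. -/
abbrev V := Sym l →₀ ℂ

/-- `gcd(u,v,l) = 1`. -/
def copr (u v : ZMod l) : Prop := Nat.gcd (Nat.gcd (ZMod.val u) (ZMod.val v)) l = 1

instance (u v : ZMod l) : Decidable (copr l u v) := by unfold copr; infer_instance

noncomputable def X2 (u v : ZMod l) : V l := Finsupp.single (0, u, v) 1
noncomputable def XY (u v : ZMod l) : V l := Finsupp.single (1, u, v) 1
noncomputable def Y2 (u v : ZMod l) : V l := Finsupp.single (2, u, v) 1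

/-- The relation subspace: the relations of Merel–Shokurov on coprime symbols,
together with the (dummy) basis vectors at non-coprime indices. -/
noncomputable def Rel : Submodule ℂ (V l) :=
  Submodule.span ℂ
    ({ w | ∃ u v, ¬ copr l u v ∧ (w = X2 l u v ∨ w = XY l u v ∨ w = Y2 l u v) } ∪
     { w | ∃ u v, copr l u v ∧
        (w = X2 l u v + Y2 l v (-u) ∨
         w = XY l u v - XY l v (-u) ∨
         w = Y2 l u v + X2 l v (-u) ∨
         w = XY l v (-u - v) - XY l (-u - v) u + Y2 l (-u - v) u + X2 l u v - XY l u v) })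

/-- The space of weight four modular symbols of level `l`. -/
abbrev M := V l ⧸ Rel l

noncomputable def x2 (u v : ZMod l) : M l := Submodule.Quotient.mk (X2 l u v)
noncomputable def xy (u v : ZMod l) : M l := Submodule.Quotient.mk (XY l u v)
noncomputable def y2 (u v : ZMod l) : M l := Submodule.Quotient.mk (Y2 l u v)

/-- The class of `p₂·x²(u,v) + p₁·xy(u,v) + p₀·y²(u,v)` in `M l`. -/
noncomputable def pcl (p2 p1 p0 : ℂ) (u v : ZMod l) : M l :=
  p2 • x2 l u v + p1 • xy l u v + p0 • y2 l u v

end MW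

namespace MW
variable {l : ℕ}

lemma coprIff (hl : 0 < l) (u v : ZMod l) :
    copr l u v ↔ ∃ a b : ZMod l, a * u + b * v = 1 := by
  haveI : NeZero l := ⟨hl.ne'⟩
  constructor
  · intro h
    unfold copr at h
    set g := Nat.gcd (ZMod.val u) (ZMod.val v) with hg
    have hcop : IsCoprime (g : ℤ) (l : ℤ) := by
      rw [Int.isCoprime_iff_gcd_eq_one, Int.gcd_natCast_natCast]; exact h
    obtain ⟨x, y, hxy⟩ := hcop
    have hbez : (g : ℤ) = (ZMod.val u) * Nat.gcdA (ZMod.val u) (ZMod.val v)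
        + (ZMod.val v) * Nat.gcdB (ZMod.val u) (ZMod.val v) := Nat.gcd_eq_gcd_ab _ _
    refine ⟨((x * Nat.gcdA (ZMod.val u) (ZMod.val v) : ℤ) : ZMod l),
            ((x * Nat.gcdB (ZMod.val u) (ZMod.val v) : ℤ) : ZMod l), ?_⟩
    have := congrArg (fun t : ℤ => (t : ZMod l)) hxy
    rw [hbez] at this
    push_cast at this
    rw [ZMod.natCast_val, ZMod.natCast_val, ZMod.cast_id, ZMod.cast_id,
      ZMod.natCast_self] at this
    rw [← this]; push_cast; ring
  · rintro ⟨a, b, hab⟩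
    have h1 : ((ZMod.val a * ZMod.val u + ZMod.val b * ZMod.val v : ℕ) : ZMod l)
        = ((1 : ℕ) : ZMod l) := by
      push_cast
      rw [ZMod.natCast_val, ZMod.natCast_val, ZMod.natCast_val, ZMod.natCast_val,
        ZMod.cast_id, ZMod.cast_id, ZMod.cast_id, ZMod.cast_id, hab]
    have h2 : (ZMod.val a * ZMod.val u + ZMod.val b * ZMod.val v) ≡ 1 [MOD l] :=
      (ZMod.natCast_eq_natCast_iff _ _ _).mp h1
    have h3 : (l : ℤ) ∣ (1 : ℤ) - (ZMod.val a * ZMod.val u + ZMod.val b * ZMod.val v : ℕ) :=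
      (Nat.modEq_iff_dvd).mp h2
    set g := Nat.gcd (Nat.gcd (ZMod.val u) (ZMod.val v)) l with hg
    have hgu : (g : ℤ) ∣ (ZMod.val u : ℤ) :=
      Int.natCast_dvd_natCast.mpr (dvd_trans (Nat.gcd_dvd_left _ _) (Nat.gcd_dvd_left _ _))
    have hgv : (g : ℤ) ∣ (ZMod.val v : ℤ) :=
      Int.natCast_dvd_natCast.mpr (dvd_trans (Nat.gcd_dvd_left _ _) (Nat.gcd_dvd_right _ _))
    have hgl : (g : ℤ) ∣ (l : ℤ) := Int.natCast_dvd_natCast.mpr (Nat.gcd_dvd_right _ _)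
    have hsum : (g : ℤ) ∣ ((ZMod.val a * ZMod.val u + ZMod.val b * ZMod.val v : ℕ) : ℤ) := by
      push_cast
      exact dvd_add (Dvd.dvd.mul_left hgu _) (Dvd.dvd.mul_left hgv _)
    have : (g : ℤ) ∣ 1 := by
      have := dvd_add (hgl.trans h3) hsum
      simpa using this
    have := Int.eq_one_of_dvd_one (by positivity) this
    exact_mod_cast this

lemma copr_lin (hl : 0 < l) {u v : ZMod l} (h : copr l u v)
    (p q r s u' v' : ZMod l) (hdet : p * s - q * r = 1)
    (hu' : u' = p * u + q * v) (hv' : v' = r * u + s * v) : copr l u' v' := by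
  rw [coprIff hl] at h ⊢
  obtain ⟨a, b, hab⟩ := h
  refine ⟨a * s - b * r, b * p - a * q, ?_⟩
  subst hu' hv'
  linear_combination (a * u + b * v) * hdet + hab


lemma copr_rot (hl : 0 < l) {u v : ZMod l} (h : copr l u v) : copr l v (-u) :=
  copr_lin hl h 0 1 (-1) 0 _ _ (by ring) (by ring) (by ring)

lemma copr_rot_iff (hl : 0 < l) (u v : ZMod l) : copr l u v ↔ copr l v (-u) := by
  refine ⟨copr_rot hl, fun h => ?_⟩
  exact copr_lin hl h 0 (-1) 1 0 _ _ (by ring) (by ring) (by ring)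

lemma copr_neg_iff (hl : 0 < l) (u v : ZMod l) : copr l u v ↔ copr l (-u) (-v) := by
  rw [copr_rot_iff hl u v, copr_rot_iff hl v (-u)]

lemma copr_s1 (hl : 0 < l) {u v : ZMod l} (h : copr l u v) : copr l v (-u - v) :=
  copr_lin hl h 0 1 (-1) (-1) _ _ (by ring) (by ring) (by ring)

lemma copr_s2 (hl : 0 < l) {u v : ZMod l} (h : copr l u v) : copr l (-u - v) u :=
  copr_lin hl h (-1) (-1) 1 0 _ _ (by ring) (by ring) (by ring)

lemma copr_C (hl : 0 < l) {u v : ZMod l} (h : copr l u v) (k : ZMod l) :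
    copr l u (v + k * u) :=
  copr_lin hl h 1 0 k 1 _ _ (by ring) (by ring) (by ring)

lemma copr_A (hl : 0 < l) {u v : ZMod l} (h : copr l u v) (k : ZMod l) :
    copr l (v + k * u) (-(k + 1) * u - v) :=
  copr_lin hl h k 1 (-(k+1)) (-1) _ _ (by ring) (by ring) (by ring)

lemma copr_B (hl : 0 < l) {u v : ZMod l} (h : copr l u v) (k : ZMod l) :
    copr l (-(k + 1) * u - v) u :=
  copr_lin hl h (-(k+1)) (-1) 1 0 _ _ (by ring) (by ring) (by ring)

/- relations in `M l` -/

lemma mk_eq_zero_of_mem {w : V l} (hw : w ∈ Rel l)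
    : ((Rel l).mkQ w : M l) = 0 := (Submodule.Quotient.mk_eq_zero _).mpr hw

lemma hr2 {u v : ZMod l} (h : copr l u v) : xy l u v = xy l v (-u) := by
  rw [xy, xy, Submodule.Quotient.eq]
  exact Submodule.subset_span (Or.inr ⟨u, v, h, Or.inr (Or.inl rfl)⟩)

lemma hr3 {u v : ZMod l} (h : copr l u v) : y2 l u v = - x2 l v (-u) := by
  have hm : Y2 l u v + X2 l v (-u) ∈ Rel l :=
    Submodule.subset_span (Or.inr ⟨u, v, h, Or.inr (Or.inr (Or.inl rfl))⟩)
  have h0 : (Rel l).mkQ (Y2 l u v + X2 l v (-u)) = 0 := mk_eq_zero_of_mem hm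
  rw [map_add] at h0
  have : (Rel l).mkQ (Y2 l u v) = y2 l u v := rfl
  have : (Rel l).mkQ (X2 l v (-u)) = x2 l v (-u) := rfl
  exact eq_neg_of_add_eq_zero_left h0

lemma hr4 {u v : ZMod l} (h : copr l u v) :
    xy l v (-u - v) - xy l (-u - v) u + y2 l (-u - v) u + x2 l u v - xy l u v = 0 := by
  have hm : XY l v (-u - v) - XY l (-u - v) u + Y2 l (-u - v) u + X2 l u v - XY l u v
      ∈ Rel l :=
    Submodule.subset_span (Or.inr ⟨u, v, h, Or.inr (Or.inr (Or.inr rfl))⟩)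
  have h0 := mk_eq_zero_of_mem hm
  rw [map_sub, map_add, map_add, map_sub] at h0
  exact h0

lemma keyM (hl : 0 < l) {u v : ZMod l} (h : copr l u v) :
    xy l v (-u - v) - xy l (-u - v) u - xy l u v = x2 l u (u + v) - x2 l u v := by
  have h3 : y2 l (-u - v) u = - x2 l u (u + v) := by
    have := hr3 (copr_s2 hl h)
    rw [show -(-u - v) = u + v from by ring] at this
    exact this
  have h4 := hr4 h
  rw [h3] at h4
  rw [← sub_eq_zero]
  conv_rhs => rw [← h4]
  abel

lemma sum_rel_M (hl : 0 < l) {u v : ZMod l} (h : copr l u v) :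
    ∑ k ∈ Finset.range l,
      (xy l (v + (k : ZMod l) * u) (-((k : ZMod l) + 1) * u - v)
        - xy l (-((k : ZMod l) + 1) * u - v) u
        - xy l u (v + (k : ZMod l) * u)) = 0 := by
  have hterm : ∀ k : ℕ,
      xy l (v + (k : ZMod l) * u) (-((k : ZMod l) + 1) * u - v)
        - xy l (-((k : ZMod l) + 1) * u - v) u
        - xy l u (v + (k : ZMod l) * u)
      = x2 l u (v + ((k+1 : ℕ) : ZMod l) * u) - x2 l u (v + (k : ZMod l) * u) := by
    intro k
    have hc := copr_C hl h (k : ZMod l)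
    have := keyM hl hc
    rw [show -u - (v + (k : ZMod l) * u) = -((k : ZMod l) + 1) * u - v from by ring,
        show u + (v + (k : ZMod l) * u) = v + ((k+1 : ℕ) : ZMod l) * u from by
          push_cast; ring] at this
    exact this
  calc ∑ k ∈ Finset.range l,
      (xy l (v + (k : ZMod l) * u) (-((k : ZMod l) + 1) * u - v)
        - xy l (-((k : ZMod l) + 1) * u - v) u
        - xy l u (v + (k : ZMod l) * u))
      = ∑ k ∈ Finset.range l,
        (x2 l u (v + ((k+1 : ℕ) : ZMod l) * u) - x2 l u (v + (k : ZMod l) * u)) :=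
        Finset.sum_congr rfl fun k _ => hterm k
    _ = x2 l u (v + (l : ZMod l) * u) - x2 l u (v + ((0:ℕ) : ZMod l) * u) :=
        Finset.sum_range_sub (fun n => x2 l u (v + (n : ZMod l) * u)) l
    _ = 0 := by rw [ZMod.natCast_self]; push_cast; rw [sub_eq_zero]

abbrev Pt (l : ℕ) := {p : ZMod l × ZMod l // copr l p.1 p.2}

def Gen (l : ℕ) : Set (Pt l →₀ ℂ) :=
  ({ w : Pt l →₀ ℂ |
      ∃ p q : Pt l,
        (q.1.1 = p.1.2 ∧ q.1.2 = -p.1.1) ∧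
        w = Finsupp.single p 1 - Finsupp.single q 1 } ∪
   { w : Pt l →₀ ℂ |
      ∃ (u v : ZMod l) (_ : copr l u v)
        (A B C : ℕ → Pt l),
        (∀ k : ℕ,
          (A k).1 = (v + (k : ZMod l) * u, -((k : ZMod l) + 1) * u - v) ∧
          (B k).1 = (-((k : ZMod l) + 1) * u - v, u) ∧
          (C k).1 = (u, v + (k : ZMod l) * u)) ∧
        w = ∑ k ∈ Finset.range l,
          (Finsupp.single (A k) 1 - Finsupp.single (B k) 1 -
            Finsupp.single (C k) 1) })

noncomputable def SG (l : ℕ) : Submodule ℂ (Pt l →₀ ℂ) := Submodule.span ℂ (Gen l)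

abbrev QQ (l : ℕ) := (Pt l →₀ ℂ) ⧸ SG l

noncomputable def eQ (l : ℕ) (u v : ZMod l) : QQ l :=
  if h : copr l u v then (SG l).mkQ (Finsupp.single ⟨(u, v), h⟩ 1) else 0

noncomputable def sQ (l : ℕ) (u v : ZMod l) : QQ l :=
  eQ l v (-u - v) - eQ l (-u - v) u - eQ l u v

lemma eQ_pos {u v : ZMod l} (h : copr l u v) :
    eQ l u v = (SG l).mkQ (Finsupp.single ⟨(u, v), h⟩ 1) := dif_pos h

lemma eQ_rot (hl : 0 < l) (u v : ZMod l) : eQ l u v = eQ l v (-u) := by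
  by_cases h : copr l u v
  · have h' : copr l v (-u) := copr_rot hl h
    rw [eQ_pos h, eQ_pos h', ← sub_eq_zero, ← map_sub, Submodule.mkQ_apply,
      Submodule.Quotient.mk_eq_zero]
    exact Submodule.subset_span (Or.inl ⟨⟨(u, v), h⟩, ⟨(v, -u), h'⟩, ⟨rfl, rfl⟩, rfl⟩)
  · rw [eQ, eQ, dif_neg h, dif_neg (fun hc => h ((copr_rot_iff hl u v).mpr hc))]

lemma eQ_neg (hl : 0 < l) (u v : ZMod l) : eQ l u v = eQ l (-u) (-v) := by
  rw [eQ_rot hl u v, eQ_rot hl v (-u)]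

lemma sQ_neg (hl : 0 < l) (u v : ZMod l) : sQ l (-u) (-v) = sQ l u v := by
  have e1 : eQ l (-v) (u + v) = eQ l v (-u - v) := by
    have := eQ_neg hl v (-u - v)
    rw [show -(-u - v) = u + v from by ring] at this
    exact this.symm
  have e2 : eQ l (u + v) (-u) = eQ l (-u - v) u := by
    have := eQ_neg hl (-u - v) u
    rw [show -(-u - v) = u + v from by ring] at this
    exact this.symm
  have e3 : eQ l (-u) (-v) = eQ l u v := (eQ_neg hl u v).symm
  rw [sQ, sQ, show -(-u) - -v = u + v from by ring, e1, e2, e3]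

lemma sum_sQ (hl : 0 < l) {u v : ZMod l} (h : copr l u v) :
    ∑ k ∈ Finset.range l, sQ l u (v + (k : ZMod l) * u) = 0 := by
  set A : ℕ → Pt l := fun k =>
    ⟨(v + (k : ZMod l) * u, -((k : ZMod l) + 1) * u - v), copr_A hl h _⟩ with hA
  set B : ℕ → Pt l := fun k =>
    ⟨(-((k : ZMod l) + 1) * u - v, u), copr_B hl h _⟩ with hB
  set C : ℕ → Pt l := fun k =>
    ⟨(u, v + (k : ZMod l) * u), copr_C hl h _⟩ with hC
  have hmem : (∑ k ∈ Finset.range l,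
      (Finsupp.single (A k) 1 - Finsupp.single (B k) 1 - Finsupp.single (C k) 1))
      ∈ Gen l :=
    Or.inr ⟨u, v, h, A, B, C, fun k => ⟨rfl, rfl, rfl⟩, rfl⟩
  have h0 : (SG l).mkQ (∑ k ∈ Finset.range l,
      (Finsupp.single (A k) 1 - Finsupp.single (B k) 1 - Finsupp.single (C k) 1)) = 0 := by
    rw [Submodule.mkQ_apply, Submodule.Quotient.mk_eq_zero]
    exact Submodule.subset_span hmem
  rw [map_sum] at h0
  simp only [map_sub] at h0
  have hterm : ∀ k : ℕ, sQ l u (v + (k : ZMod l) * u)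
      = (SG l).mkQ (Finsupp.single (A k) 1) - (SG l).mkQ (Finsupp.single (B k) 1)
        - (SG l).mkQ (Finsupp.single (C k) 1) := by
    intro k
    rw [sQ, show -u - (v + (k : ZMod l) * u) = -((k : ZMod l) + 1) * u - v from by ring,
      eQ_pos (copr_A hl h (k : ZMod l)), eQ_pos (copr_B hl h (k : ZMod l)),
      eQ_pos (copr_C hl h (k : ZMod l))]
  rw [Finset.sum_congr rfl fun k _ => hterm k]
  exact h0

lemma tele {Q : Type*} [AddCommGroup Q] [Module ℂ Q] (t : ℕ → Q) (L : ℕ) :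
    ∑ n ∈ Finset.range L, ((n : ℂ) • t (n + 1) - (n : ℂ) • t n)
      = ((L : ℂ) - 1) • t L - ∑ n ∈ Finset.range L, t n + t 0 := by
  induction L with
  | zero => simp
  | succ L ih =>
    rw [Finset.sum_range_succ, ih, Finset.sum_range_succ]
    push_cast
    module

noncomputable def fX2 (l : ℕ) (u v : ZMod l) : QQ l :=
  if copr l u v then
    ((l : ℂ))⁻¹ • ∑ n ∈ Finset.range l, (n : ℂ) • sQ l u (v + (n : ZMod l) * u)
  else 0

lemma fX2_neg (hl : 0 < l) (u v : ZMod l) : fX2 l (-u) (-v) = fX2 l u v := by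
  rw [fX2, fX2]
  by_cases h : copr l u v
  · rw [if_pos ((copr_neg_iff hl u v).mp h), if_pos h]
    congr 1
    refine Finset.sum_congr rfl fun n _ => ?_
    congr 1
    rw [show -v + (n : ZMod l) * (-u) = -(v + (n : ZMod l) * u) from by ring]
    exact sQ_neg hl u (v + (n : ZMod l) * u)
  · rw [if_neg (fun hc => h ((copr_neg_iff hl u v).mpr hc)), if_neg h]

lemma fX2_step (hl : 0 < l) (hlc : (l : ℂ) ≠ 0) {u v : ZMod l} (h : copr l u v) :
    fX2 l u (u + v) - fX2 l u v = sQ l u v := by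
  set t : ℕ → QQ l := fun n => sQ l u (v + (n : ZMod l) * u) with ht
  have h1 : fX2 l u v = (l : ℂ)⁻¹ • ∑ n ∈ Finset.range l, (n : ℂ) • t n := if_pos h
  have hc' : copr l u (u + v) := by
    have := copr_C hl h 1
    rw [show v + (1 : ZMod l) * u = u + v from by ring] at this
    exact this
  have h2 : fX2 l u (u + v) = (l : ℂ)⁻¹ • ∑ n ∈ Finset.range l, (n : ℂ) • t (n + 1) := by
    rw [fX2, if_pos hc']
    congr 1
    refine Finset.sum_congr rfl fun n _ => ?_
    rw [ht]
    congr 2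
    push_cast
    ring
  have ht0 : t 0 = sQ l u v := by rw [ht]; norm_num
  have htl : t l = t 0 := by rw [ht]; simp [ZMod.natCast_self]
  have hsum : ∑ n ∈ Finset.range l, t n = 0 := sum_sQ hl h
  rw [h1, h2, ← smul_sub, ← Finset.sum_sub_distrib, tele, htl, hsum, ht0]
  rw [sub_zero, sub_smul, one_smul, sub_add_cancel, smul_smul, inv_mul_cancel₀ hlc,
    one_smul]

/-! ### The map `φ` -/

noncomputable def gsym (l : ℕ) : Sym l → QQ l := fun x =>
  if x.1 = 0 then fX2 l x.2.1 x.2.2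
  else if x.1 = 1 then eQ l x.2.1 x.2.2
  else - fX2 l x.2.2 (-x.2.1)

noncomputable def phi (l : ℕ) : V l →ₗ[ℂ] QQ l :=
  Finsupp.lift (QQ l) ℂ (Sym l) (gsym l)

lemma phi_single (x : Sym l) (c : ℂ) :
    phi l (Finsupp.single x c) = c • gsym l x := by
  simp [phi, Finsupp.lift_apply]

lemma phi_X2 (u v : ZMod l) : phi l (X2 l u v) = fX2 l u v := by
  rw [X2, phi_single, one_smul]
  rfl

lemma phi_XY (u v : ZMod l) : phi l (XY l u v) = eQ l u v := by
  rw [XY, phi_single, one_smul]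
  rfl

lemma phi_Y2 (u v : ZMod l) : phi l (Y2 l u v) = - fX2 l v (-u) := by
  rw [Y2, phi_single, one_smul]
  rfl

lemma hker (hl : 0 < l) (hlc : (l : ℂ) ≠ 0) : Rel l ≤ LinearMap.ker (phi l) := by
  rw [Rel, Submodule.span_le]
  rintro w (⟨u, v, hn, (rfl | rfl | rfl)⟩ | ⟨u, v, h, (rfl | rfl | rfl | rfl)⟩) <;>
    simp only [SetLike.mem_coe, LinearMap.mem_ker, map_add, map_sub,
      phi_X2, phi_XY, phi_Y2]
  · rw [fX2, if_neg hn]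
  · rw [eQ, dif_neg hn]
  · rw [fX2, if_neg (fun hc => hn ((copr_rot_iff hl u v).mpr hc)), neg_zero]
  · rw [fX2_neg hl u v, add_neg_cancel]
  · rw [eQ_rot hl u v, sub_self]
  · rw [neg_add_cancel]
  · have hs := fX2_step hl hlc h
    rw [show -(-u - v) = u + v from by ring]
    have hE : eQ l v (-u - v) - eQ l (-u - v) u + -fX2 l u (u + v) + fX2 l u v
        - eQ l u v = sQ l u v - (fX2 l u (u + v) - fX2 l u v) := by
      rw [sQ]; abel
    rw [hE, hs, sub_self]

lemma lift_single {X : Type*} {Mo : Type*} [AddCommGroup Mo] [Module ℂ Mo]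
    (f : X → Mo) (a : X) (b : ℂ) :
    (Finsupp.lift Mo ℂ X) f (Finsupp.single a b) = b • f a := by
  simp [Finsupp.lift_apply]


end MW

open MW in
theorem stmt1 (l : ℕ) (hl : 5 ≤ l)
    (w : {p : ZMod l × ZMod l // copr l p.1 p.2} →₀ ℂ) :
    ((Finsupp.lift (M l) ℂ {p : ZMod l × ZMod l // copr l p.1 p.2})
        (fun p => xy l p.1.1 p.1.2)) w = 0 ↔
    w ∈ Submodule.span ℂ
      ({ w : {p : ZMod l × ZMod l // copr l p.1 p.2} →₀ ℂ |
          ∃ p q : {p : ZMod l × ZMod l // copr l p.1 p.2},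
            (q.1.1 = p.1.2 ∧ q.1.2 = -p.1.1) ∧
            w = Finsupp.single p 1 - Finsupp.single q 1 } ∪
       { w : {p : ZMod l × ZMod l // copr l p.1 p.2} →₀ ℂ |
          ∃ (u v : ZMod l) (_ : copr l u v)
            (A B C : ℕ → {p : ZMod l × ZMod l // copr l p.1 p.2}),
            (∀ k : ℕ,
              (A k).1 = (v + (k : ZMod l) * u, -((k : ZMod l) + 1) * u - v) ∧
              (B k).1 = (-((k : ZMod l) + 1) * u - v, u) ∧
              (C k).1 = (u, v + (k : ZMod l) * u)) ∧
            w = ∑ k ∈ Finset.range l,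
              (Finsupp.single (A k) 1 - Finsupp.single (B k) 1 -
                Finsupp.single (C k) 1) }) := by
  have hl0 : 0 < l := by omega
  have hlc : (l : ℂ) ≠ 0 := Nat.cast_ne_zero.mpr (by omega)
  set xyMap : (Pt l →₀ ℂ) →ₗ[ℂ] M l :=
    (Finsupp.lift (M l) ℂ {p : ZMod l × ZMod l // copr l p.1 p.2})
      (fun p => xy l p.1.1 p.1.2) with hxyMap
  have hGen : Submodule.span ℂ
      ({ w : {p : ZMod l × ZMod l // copr l p.1 p.2} →₀ ℂ |
          ∃ p q : {p : ZMod l × ZMod l // copr l p.1 p.2},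
            (q.1.1 = p.1.2 ∧ q.1.2 = -p.1.1) ∧
            w = Finsupp.single p 1 - Finsupp.single q 1 } ∪
       { w : {p : ZMod l × ZMod l // copr l p.1 p.2} →₀ ℂ |
          ∃ (u v : ZMod l) (_ : copr l u v)
            (A B C : ℕ → {p : ZMod l × ZMod l // copr l p.1 p.2}),
            (∀ k : ℕ,
              (A k).1 = (v + (k : ZMod l) * u, -((k : ZMod l) + 1) * u - v) ∧
              (B k).1 = (-((k : ZMod l) + 1) * u - v, u) ∧
              (C k).1 = (u, v + (k : ZMod l) * u)) ∧
            w = ∑ k ∈ Finset.range l,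
              (Finsupp.single (A k) 1 - Finsupp.single (B k) 1 -
                Finsupp.single (C k) 1) }) = SG l := rfl
  rw [hGen]
  constructor
  · intro h0
    set phibar : M l →ₗ[ℂ] QQ l := (Rel l).liftQ (phi l) (hker hl0 hlc) with hphibar
    have hcomp : phibar.comp xyMap = (SG l).mkQ := by
      apply Finsupp.lhom_ext
      intro a b
      rw [LinearMap.comp_apply, hxyMap, lift_single, map_smul]
      have h1 : phibar (xy l a.1.1 a.1.2) = eQ l a.1.1 a.1.2 := by
        rw [hphibar, xy, Submodule.liftQ_apply, phi_XY]
      rw [h1, eQ_pos a.2]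
      have h2 : (⟨(a.1.1, a.1.2), a.2⟩ : Pt l) = a := rfl
      rw [h2, show Finsupp.single a b = b • Finsupp.single a (1 : ℂ) from by
        rw [Finsupp.smul_single', mul_one], map_smul]
    have h1 : phibar (xyMap w) = (SG l).mkQ w := LinearMap.congr_fun hcomp w
    rw [h0, map_zero] at h1
    rw [← Submodule.Quotient.mk_eq_zero (SG l), ← Submodule.mkQ_apply]
    exact h1.symm
  · intro hw
    have hle : SG l ≤ LinearMap.ker xyMap := by
      rw [SG, Submodule.span_le]
      rintro w' (⟨p, q, ⟨hq1, hq2⟩, rfl⟩ | ⟨u, v, h, A, B, C, hABC, rfl⟩) <;>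
        simp only [SetLike.mem_coe, LinearMap.mem_ker, map_sub, map_sum]
      · rw [hxyMap, lift_single, lift_single, one_smul, one_smul, hq1, hq2,
          ← hr2 p.2, sub_self]
      · have hterm : ∀ k ∈ Finset.range l,
            xyMap (Finsupp.single (A k) 1) - xyMap (Finsupp.single (B k) 1)
              - xyMap (Finsupp.single (C k) 1)
            = xy l (v + (k : ZMod l) * u) (-((k : ZMod l) + 1) * u - v)
              - xy l (-((k : ZMod l) + 1) * u - v) u
              - xy l u (v + (k : ZMod l) * u) := by
          intro k _
          obtain ⟨eA, eB, eC⟩ := hABC k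
          rw [hxyMap, lift_single, lift_single, lift_single, one_smul, one_smul,
            one_smul]
          simp only [eA, eB, eC]
        rw [Finset.sum_congr rfl hterm, sum_rel_M hl0 h]
    exact hle hw
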